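/- Let A be a finite set with |A| = q ≥ 2, let n ≥ 2, and set Q = q^{q^n}. There exists an n-universal transformation f : A^m → A^m of size m = 2n + 2Q^n whose time satisfies t_f ≤ 2n + Q^n + 1. -/

import Mathlib

/-- The instruction of `A^m` induced by the `i`-th coordinate function of `f`. -/
def instr {A : Type*} {m : ℕ} (f : (Fin m → A) → Fin m → A) (i : Fin m) :
    (Fin m → A) → Fin m → A :=
  fun x => Function.update x i (f x i)

/-- Apply a list of induced instructions of `f`, first element of the list first. -/
def applyInstrs {A : Type*} {m : ℕ} (f : (Fin m → A) → Fin m → A) :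
    List (Fin m) → (Fin m → A) → Fin m → A
  | [], x => x
  | i :: l, x => applyInstrs f l (instr f i x)

/-- Projection of `A^m` onto the first `n` coordinates. -/
def pr {A : Type*} {m n : ℕ} (hmn : n ≤ m) (x : Fin m → A) : Fin n → A :=
  fun i => x (Fin.castLE hmn i)

theorem aux_le (n t : ℕ) : n ≤ 2 * n + t := by omega

namespace MCU

theorem applyInstrs_append {A : Type*} {m : ℕ} (f : (Fin m → A) → Fin m → A)
    (l1 l2 : List (Fin m)) (x : Fin m → A) :
    applyInstrs f (l1 ++ l2) x = applyInstrs f l2 (applyInstrs f l1 x) := by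
  induction l1 generalizing x with
  | nil => rfl
  | cons a t ih => simp [applyInstrs, ih]

theorem instr_ne {A : Type*} {m : ℕ} (f : (Fin m → A) → Fin m → A) (i j : Fin m)
    (x : Fin m → A) (h : j ≠ i) : instr f i x j = x j :=
  Function.update_of_ne h _ _

theorem instr_self {A : Type*} {m : ℕ} (f : (Fin m → A) → Fin m → A) (i : Fin m)
    (x : Fin m → A) : instr f i x i = f x i :=
  Function.update_self _ _ _

theorem applyInstrs_untouched {A : Type*} {m : ℕ} (f : (Fin m → A) → Fin m → A)
    (l : List (Fin m)) (x : Fin m → A) (j : Fin m) (h : ∀ i ∈ l, j ≠ i) :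
    applyInstrs f l x j = x j := by
  induction l generalizing x with
  | nil => rfl
  | cons a t ih =>
    simp only [applyInstrs]
    rw [ih _ (fun i hi => h i (List.mem_cons_of_mem _ hi)),
      instr_ne _ _ _ _ (h a (List.mem_cons_self))]

abbrev Idx (A : Type*) (n : ℕ) := (Fin n → A) × Fin n

section Construction

variable {q n m : ℕ} {A : Type*} [Fintype A]

def yI (hm : 2 * n + 2 + Fintype.card (Idx A n) ≤ m) (i : Fin n) : Fin m :=
  ⟨n + i.1, by have := i.isLt; omega⟩

def xI (hm : 2 * n + 2 + Fintype.card (Idx A n) ≤ m) (i : Fin n) : Fin m :=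
  ⟨i.1, by have := i.isLt; omega⟩

def dI (hm : 2 * n + 2 + Fintype.card (Idx A n) ≤ m) : Fin m :=
  ⟨2 * n, by omega⟩

def eI (hm : 2 * n + 2 + Fintype.card (Idx A n) ≤ m) : Fin m :=
  ⟨2 * n + 1, by omega⟩

noncomputable def cI (hm : 2 * n + 2 + Fintype.card (Idx A n) ≤ m) (p : Idx A n) : Fin m :=
  ⟨2 * n + 2 + (Fintype.equivFin (Idx A n) p).1, by
    have := (Fintype.equivFin (Idx A n) p).isLt; omega⟩

theorem cI_inj (hm : 2 * n + 2 + Fintype.card (Idx A n) ≤ m) {p p' : Idx A n}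
    (h : cI hm p = cI hm p') : p = p' := by
  have hv : 2 * n + 2 + (Fintype.equivFin (Idx A n) p).1
      = 2 * n + 2 + (Fintype.equivFin (Idx A n) p').1 := congrArg Fin.val h
  have : (Fintype.equivFin (Idx A n) p) = (Fintype.equivFin (Idx A n) p') :=
    Fin.ext (by omega)
  exact (Fintype.equivFin (Idx A n)).injective this

noncomputable def F (e : A ≃ ZMod q) (hm : 2 * n + 2 + Fintype.card (Idx A n) ≤ m) :
    (Fin m → A) → Fin m → A := fun s j =>
  if h : j.1 < n then s (cI hm ((fun i => s (yI hm i)), ⟨j.1, h⟩))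
  else if h2 : j.1 < 2 * n then s ⟨j.1 - n, by omega⟩
  else if j.1 = 2 * n then e.symm (e (s j) + 1)
  else if j.1 = 2 * n + 1 then s (dI hm)
  else e.symm (e (s (dI hm)) - e (s (eI hm)))

variable (e : A ≃ ZMod q) (hm : 2 * n + 2 + Fintype.card (Idx A n) ≤ m)

theorem F_x (s : Fin m → A) (j : Fin m) (h : j.1 < n) :
    F e hm s j = s (cI hm ((fun k => s (yI hm k)), ⟨j.1, h⟩)) := by
  show (if h : j.1 < n then _ else _) = _
  rw [dif_pos h]

theorem F_x' (s : Fin m → A) (i : Fin n) :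
    F e hm s (xI hm i) = s (cI hm ((fun k => s (yI hm k)), i)) := by
  rw [F_x e hm s (xI hm i) i.isLt]
  congr 1

theorem F_y (s : Fin m → A) (i : Fin n) :
    F e hm s (yI hm i) = s (xI hm i) := by
  have hi := i.isLt
  show (if h : (yI hm i).1 < n then _ else _) = _
  rw [dif_neg (show ¬ ((yI hm i).1 < n) by show ¬ (n + i.1 < n); omega),
    dif_pos (show (yI hm i).1 < 2 * n by show n + i.1 < 2 * n; omega)]
  congr 1
  exact Fin.ext (show n + i.1 - n = i.1 by omega)

theorem F_d (s : Fin m → A) :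
    F e hm s (dI hm) = e.symm (e (s (dI hm)) + 1) := by
  show (if h : (dI hm : Fin m).1 < n then _ else _) = _
  rw [dif_neg (show ¬ ((dI hm : Fin m).1 < n) by show ¬ (2 * n < n); omega),
    dif_neg (show ¬ ((dI hm : Fin m).1 < 2 * n) by show ¬ (2 * n < 2 * n); omega),
    if_pos (show (dI hm : Fin m).1 = 2 * n from rfl)]

theorem F_e (s : Fin m → A) :
    F e hm s (eI hm) = s (dI hm) := by
  show (if h : (eI hm : Fin m).1 < n then _ else _) = _
  rw [dif_neg (show ¬ ((eI hm : Fin m).1 < n) by show ¬ (2 * n + 1 < n); omega),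
    dif_neg (show ¬ ((eI hm : Fin m).1 < 2 * n) by show ¬ (2 * n + 1 < 2 * n); omega),
    if_neg (show ¬ ((eI hm : Fin m).1 = 2 * n) by show ¬ (2 * n + 1 = 2 * n); omega),
    if_pos (show (eI hm : Fin m).1 = 2 * n + 1 from rfl)]

theorem F_c (s : Fin m → A) (p : Idx A n) :
    F e hm s (cI hm p) = e.symm (e (s (dI hm)) - e (s (eI hm))) := by
  show (if h : (cI hm p : Fin m).1 < n then _ else _) = _
  rw [dif_neg (show ¬ ((cI hm p : Fin m).1 < n) by
        show ¬ (2 * n + 2 + (Fintype.equivFin (Idx A n) p).1 < n); omega),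
    dif_neg (show ¬ ((cI hm p : Fin m).1 < 2 * n) by
        show ¬ (2 * n + 2 + (Fintype.equivFin (Idx A n) p).1 < 2 * n); omega),
    if_neg (show ¬ ((cI hm p : Fin m).1 = 2 * n) by
        show ¬ (2 * n + 2 + (Fintype.equivFin (Idx A n) p).1 = 2 * n); omega),
    if_neg (show ¬ ((cI hm p : Fin m).1 = 2 * n + 1) by
        show ¬ (2 * n + 2 + (Fintype.equivFin (Idx A n) p).1 = 2 * n + 1); omega)]

theorem yI_ne_xI (i k : Fin n) : yI hm i ≠ xI hm k := by
  have := k.isLt; intro h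
  have hv : n + i.1 = k.1 := congrArg Fin.val h; omega

theorem yI_ne_dI (i : Fin n) : yI hm i ≠ dI hm := by
  have := i.isLt; intro h
  have hv : n + i.1 = 2 * n := congrArg Fin.val h; omega

theorem yI_ne_eI (i : Fin n) : yI hm i ≠ eI hm := by
  have := i.isLt; intro h
  have hv : n + i.1 = 2 * n + 1 := congrArg Fin.val h; omega

theorem yI_ne_cI (i : Fin n) (p : Idx A n) : yI hm i ≠ cI hm p := by
  have := i.isLt; intro h
  have hv : n + i.1 = 2 * n + 2 + (Fintype.equivFin (Idx A n) p).1 :=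
    congrArg Fin.val h
  omega

theorem xI_ne_dI (i : Fin n) : xI hm i ≠ dI hm := by
  have := i.isLt; intro h
  have hv : i.1 = 2 * n := congrArg Fin.val h; omega

theorem xI_ne_eI (i : Fin n) : xI hm i ≠ eI hm := by
  have := i.isLt; intro h
  have hv : i.1 = 2 * n + 1 := congrArg Fin.val h; omega

theorem xI_ne_cI (i : Fin n) (p : Idx A n) : xI hm i ≠ cI hm p := by
  have := i.isLt; intro h
  have hv : i.1 = 2 * n + 2 + (Fintype.equivFin (Idx A n) p).1 := congrArg Fin.val h
  omega

theorem xI_ne_yI (i k : Fin n) : xI hm i ≠ yI hm k := by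
  have := i.isLt; intro h
  have hv : i.1 = n + k.1 := congrArg Fin.val h; omega

theorem cI_ne_dI (p : Idx A n) : cI hm p ≠ dI hm := by
  intro h
  have hv : 2 * n + 2 + (Fintype.equivFin (Idx A n) p).1 = 2 * n := congrArg Fin.val h
  omega

theorem cI_ne_eI (p : Idx A n) : cI hm p ≠ eI hm := by
  intro h
  have hv : 2 * n + 2 + (Fintype.equivFin (Idx A n) p).1 = 2 * n + 1 :=
    congrArg Fin.val h
  omega

theorem dI_ne_eI : (dI hm : Fin m) ≠ eI hm := by
  intro h
  have hv : 2 * n = 2 * n + 1 := congrArg Fin.val h; omega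

theorem eI_ne_dI : (eI hm : Fin m) ≠ dI hm := (dI_ne_eI hm).symm

theorem yI_injective : Function.Injective (yI hm (A := A)) := by
  intro i k h
  have hv : n + i.1 = n + k.1 := congrArg Fin.val h
  exact Fin.ext (by omega)

theorem copy_phase (L : List (Fin n)) (s : Fin m → A) :
    (∀ j : Fin m, (j.1 < n ∨ 2 * n ≤ j.1) →
      applyInstrs (F e hm) (L.map (yI hm)) s j = s j)
    ∧ (∀ i : Fin n, i ∈ L →
      applyInstrs (F e hm) (L.map (yI hm)) s (yI hm i) = s (xI hm i))
    ∧ (∀ i : Fin n, i ∉ L →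
      applyInstrs (F e hm) (L.map (yI hm)) s (yI hm i) = s (yI hm i)) := by
  induction L generalizing s with
  | nil =>
    exact ⟨fun j _ => rfl, fun i hi => absurd hi List.not_mem_nil, fun i _ => rfl⟩
  | cons a L ih =>
    simp only [List.map_cons, applyInstrs]
    set s' := instr (F e hm) (yI hm a) s with hs'
    have hne : ∀ j : Fin m, j ≠ yI hm a → s' j = s j := fun j hj => instr_ne _ _ _ _ hj
    have hya : s' (yI hm a) = s (xI hm a) := by rw [hs', instr_self, F_y]
    refine ⟨?_, ?_, ?_⟩
    · intro j hj
      rw [(ih s').1 j hj, hne j ?_]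
      intro hh
      have hv : j.1 = n + a.1 := congrArg Fin.val hh
      have := a.isLt
      omega
    · intro i hi
      by_cases hiL : i ∈ L
      · rw [(ih s').2.1 i hiL, hne _ (xI_ne_yI hm i a)]
      · have hia : i = a := by
          rcases List.mem_cons.mp hi with h | h
          · exact h
          · exact absurd h hiL
        subst hia
        rw [(ih s').2.2 i hiL, hya]
    · intro i hi
      rw [List.mem_cons] at hi
      push_neg at hi
      rw [(ih s').2.2 i hi.2, hne _ (fun h => hi.1 (yI_injective hm h))]

theorem dpokes [NeZero q] (k : ℕ) (s : Fin m → A) :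
    (applyInstrs (F e hm) (List.replicate k (dI hm)) s (dI hm)
      = e.symm (e (s (dI hm)) + (k : ZMod q)))
    ∧ ∀ j : Fin m, j ≠ dI hm →
      applyInstrs (F e hm) (List.replicate k (dI hm)) s j = s j := by
  induction k generalizing s with
  | zero => refine ⟨by simp [applyInstrs], fun j _ => rfl⟩
  | succ k ih =>
    simp only [List.replicate_succ, applyInstrs]
    set s' := instr (F e hm) (dI hm) s with hs'
    have hd : s' (dI hm) = e.symm (e (s (dI hm)) + 1) := by rw [hs', instr_self, F_d]
    constructor
    · rw [(ih s').1, hd, Equiv.apply_symm_apply]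
      congr 1
      push_cast
      ring
    · intro j hj
      rw [(ih s').2 j hj, hs']
      exact instr_ne _ _ _ _ hj

noncomputable def seg (g : (Fin n → A) → Fin n → A) (p : Idx A n) : List (Fin m) :=
  eI hm :: (List.replicate (e (g p.1 p.2)).val (dI hm) ++ [cI hm p])

theorem seg_phase [NeZero q] (g : (Fin n → A) → Fin n → A) (p : Idx A n)
    (s : Fin m → A) :
    (applyInstrs (F e hm) (seg e hm g p) s (cI hm p) = g p.1 p.2)
    ∧ ∀ j : Fin m, j ≠ dI hm → j ≠ eI hm → j ≠ cI hm p →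
      applyInstrs (F e hm) (seg e hm g p) s j = s j := by
  set k := (e (g p.1 p.2)).val with hk
  simp only [seg, applyInstrs]
  set s1 := instr (F e hm) (eI hm) s with hs1
  rw [applyInstrs_append]
  set s2 := applyInstrs (F e hm) (List.replicate k (dI hm)) s1 with hs2
  simp only [applyInstrs]
  have h1e : s1 (eI hm) = s (dI hm) := by rw [hs1, instr_self, F_e]
  have h1 : ∀ j, j ≠ eI hm → s1 j = s j := fun j hj => instr_ne _ _ _ _ hj
  have h2d : s2 (dI hm) = e.symm (e (s (dI hm)) + (k : ZMod q)) := by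
    rw [hs2, (dpokes e hm k s1).1, h1 _ (dI_ne_eI hm)]
  have h2 : ∀ j, j ≠ dI hm → s2 j = s1 j := (dpokes e hm k s1).2
  constructor
  · rw [instr_self, F_c, h2d, h2 _ (eI_ne_dI hm), h1e, Equiv.apply_symm_apply]
    have hsub : e (s (dI hm)) + (k : ZMod q) - e (s (dI hm)) = (k : ZMod q) := by ring
    rw [hsub, hk, ZMod.natCast_rightInverse (e (g p.1 p.2)), Equiv.symm_apply_apply]
  · intro j hd he hc
    rw [instr_ne _ _ _ _ hc, h2 _ hd, h1 _ he]

theorem segs_phase [NeZero q] (g : (Fin n → A) → Fin n → A) (P : List (Idx A n))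
    (hP : P.Nodup) (s : Fin m → A) :
    (∀ p ∈ P, applyInstrs (F e hm) (P.flatMap (seg e hm g)) s (cI hm p) = g p.1 p.2)
    ∧ ∀ j : Fin m, j ≠ dI hm → j ≠ eI hm → (∀ p ∈ P, j ≠ cI hm p) →
      applyInstrs (F e hm) (P.flatMap (seg e hm g)) s j = s j := by
  induction P generalizing s with
  | nil => exact ⟨fun p hp => absurd hp List.not_mem_nil, fun j _ _ _ => rfl⟩
  | cons a P ih =>
    have hnd := List.nodup_cons.mp hP
    simp only [List.flatMap_cons]
    rw [applyInstrs_append]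
    set s' := applyInstrs (F e hm) (seg e hm g a) s with hs'
    have hseg := seg_phase e hm g a s
    refine ⟨?_, ?_⟩
    · intro p hp
      rcases List.mem_cons.mp hp with h | h
      · subst h
        rw [(ih hnd.2 s').2 (cI hm p) (cI_ne_dI hm p) (cI_ne_eI hm p)
            (fun p' hp' hEq => hnd.1 (cI_inj hm hEq ▸ hp'))]
        exact hseg.1
      · exact (ih hnd.2 s').1 p h
    · intro j hd he hc
      rw [(ih hnd.2 s').2 j hd he (fun p hp => hc p (List.mem_cons_of_mem _ hp)), hs']
      exact hseg.2 j hd he (hc a (List.mem_cons_self))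

theorem write_phase (L : List (Fin n)) (s : Fin m → A) :
    (∀ j : Fin m, n ≤ j.1 → applyInstrs (F e hm) (L.map (xI hm)) s j = s j)
    ∧ (∀ i ∈ L, applyInstrs (F e hm) (L.map (xI hm)) s (xI hm i)
        = s (cI hm ((fun k => s (yI hm k)), i)))
    ∧ (∀ i : Fin n, i ∉ L →
        applyInstrs (F e hm) (L.map (xI hm)) s (xI hm i) = s (xI hm i)) := by
  induction L generalizing s with
  | nil =>
    exact ⟨fun _ _ => rfl, fun i hi => absurd hi List.not_mem_nil, fun _ _ => rfl⟩
  | cons a L ih =>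
    simp only [List.map_cons, applyInstrs]
    set s' := instr (F e hm) (xI hm a) s with hs'
    have hhigh : ∀ j : Fin m, n ≤ j.1 → s' j = s j := by
      intro j hj
      refine instr_ne _ _ _ _ ?_
      intro hh
      have hv : j.1 = a.1 := congrArg Fin.val hh
      have := a.isLt
      omega
    have hxa : s' (xI hm a) = s (cI hm ((fun k => s (yI hm k)), a)) := by
      rw [hs', instr_self, F_x']
    refine ⟨?_, ?_, ?_⟩
    · intro j hj
      rw [(ih s').1 j hj, hhigh j hj]
    · intro i hi
      by_cases hiL : i ∈ L
      · rw [(ih s').2.1 i hiL]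
        have hyy : (fun k => s' (yI hm k)) = (fun k => s (yI hm k)) :=
          funext fun k => hhigh _ (show n ≤ n + k.1 by omega)
        rw [hyy, hhigh _ (show n ≤ 2 * n + 2 + (Fintype.equivFin (Idx A n)
          ((fun k => s (yI hm k)), i)).1 by omega)]
      · have hia : i = a := by
          rcases List.mem_cons.mp hi with h | h
          · exact h
          · exact absurd h hiL
        subst hia
        rw [(ih s').2.2 i hiL, hxa]
    · intro i hi
      rw [List.mem_cons] at hi
      push_neg at hi
      rw [(ih s').2.2 i hi.2]
      exact instr_ne _ _ _ _ (fun h => hi.1 (Fin.ext (congrArg Fin.val h : (xI hm i).1 = (xI hm a).1)))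

noncomputable def prog (g : (Fin n → A) → Fin n → A) : List (Fin m) :=
  ((List.finRange n).map (yI hm)) ++
    (((Finset.univ : Finset (Idx A n)).toList.flatMap (seg e hm g)) ++
      ((List.finRange n).map (xI hm)))

theorem prog_correct [NeZero q] (g : (Fin n → A) → Fin n → A) (x : Fin m → A)
    (i : Fin n) :
    applyInstrs (F e hm) (prog e hm g) x (xI hm i) = g (fun k => x (xI hm k)) i := by
  simp only [prog]
  rw [applyInstrs_append, applyInstrs_append]
  set s1 := applyInstrs (F e hm) ((List.finRange n).map (yI hm)) x with hs1
  set s2 := applyInstrs (F e hm)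
    ((Finset.univ : Finset (Idx A n)).toList.flatMap (seg e hm g)) s1 with hs2
  have hcopy := copy_phase e hm (List.finRange n) x
  have hy1 : ∀ k : Fin n, s1 (yI hm k) = x (xI hm k) :=
    fun k => hcopy.2.1 k (List.mem_finRange k)
  have hsegs := segs_phase e hm g Finset.univ.toList (Finset.nodup_toList _) s1
  have hy2 : ∀ k : Fin n, s2 (yI hm k) = x (xI hm k) := by
    intro k
    rw [hs2, hsegs.2 (yI hm k) (yI_ne_dI hm k) (yI_ne_eI hm k)
        (fun p _ => yI_ne_cI hm k p), hy1]
  have hc2 : ∀ p : Idx A n, s2 (cI hm p) = g p.1 p.2 :=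
    fun p => hsegs.1 p (Finset.mem_toList.mpr (Finset.mem_univ p))
  have hw := write_phase e hm (List.finRange n) s2
  rw [hw.2.1 i (List.mem_finRange i)]
  have hyy : (fun k => s2 (yI hm k)) = (fun k => x (xI hm k)) := funext hy2
  rw [hyy, hc2]

theorem prog_length [NeZero q] (g : (Fin n → A) → Fin n → A) :
    (prog e hm g).length ≤ 2 * n + Fintype.card (Idx A n) * (q + 1) := by
  simp only [prog, List.length_append, List.length_map, List.length_finRange]
  have h1 : ((Finset.univ : Finset (Idx A n)).toList.flatMap (seg e hm g)).length
      ≤ Fintype.card (Idx A n) * (q + 1) := by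
    rw [List.length_flatMap]
    calc (List.map (List.length ∘ seg e hm g) Finset.univ.toList).sum
        ≤ (List.map (List.length ∘ seg e hm g) Finset.univ.toList).length • (q + 1) := by
          apply List.sum_le_card_nsmul
          intro y hy
          simp only [List.mem_map] at hy
          obtain ⟨p, _, rfl⟩ := hy
          simp only [Function.comp_apply, seg, List.length_cons, List.length_append,
            List.length_replicate, List.length_singleton, List.length_nil]
          have := ZMod.val_lt (e (g p.1 p.2))
          omega
      _ = Fintype.card (Idx A n) * (q + 1) := by
          rw [List.length_map, Finset.length_toList, Finset.card_univ, smul_eq_mul]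
  omega

end Construction

theorem two_pow_aux : ∀ k : ℕ, k + 4 ≤ 2 ^ (k + 2) := by
  intro k
  induction k with
  | zero => norm_num
  | succ k ih =>
    have h2 : (2 : ℕ) ^ (k + 1 + 2) = 2 * 2 ^ (k + 2) := by ring
    omega

theorem core_arith {q n : ℕ} (hq : 2 ≤ q) (hn : 2 ≤ n) :
    q ^ n * n * (q + 1) + 2 ≤ q ^ (q ^ n * n) := by
  set N := q ^ n * n with hN
  have hqn : 4 ≤ q ^ n := by
    calc (4 : ℕ) = 2 ^ 2 := by norm_num
    _ ≤ q ^ 2 := Nat.pow_le_pow_left hq 2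
    _ ≤ q ^ n := Nat.pow_le_pow_right (by omega) hn
  have hN8 : 8 ≤ N := by
    have h := Nat.mul_le_mul hqn hn
    omega
  have h1 : N ≤ 2 ^ (N - 2) := by
    have h := two_pow_aux (N - 4)
    have hr : N - 4 + 4 = N := by omega
    have hr2 : N - 4 + 2 = N - 2 := by omega
    rw [hr, hr2] at h
    exact h
  have h2 : (2 : ℕ) ^ (N - 2) ≤ q ^ (N - 2) := Nat.pow_le_pow_left hq _
  have h3 : q ^ N = q ^ (N - 2) * q ^ 2 := by
    rw [← pow_add]
    congr 1
    omega
  have h4 : q + 2 ≤ q ^ 2 := by nlinarith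
  calc N * (q + 1) + 2 ≤ N * (q + 2) := by nlinarith
    _ ≤ N * q ^ 2 := Nat.mul_le_mul_left N h4
    _ ≤ 2 ^ (N - 2) * q ^ 2 := Nat.mul_le_mul_right _ h1
    _ ≤ q ^ (N - 2) * q ^ 2 := Nat.mul_le_mul_right _ h2
    _ = q ^ N := h3.symm

end MCU

/-- With `Q = q^(q^n)`, there is an `n`-universal transformation of size
`m = 2n + 2Q^n` whose time is at most `2n + Q^n + 1`. -/
theorem universal_elementary (q n : ℕ) (hq : 2 ≤ q) (hn : 2 ≤ n)
    (A : Type*) [Fintype A] (hA : Fintype.card A = q) :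
    ∃ f : (Fin (2 * n + 2 * (q ^ q ^ n) ^ n) → A) →
          Fin (2 * n + 2 * (q ^ q ^ n) ^ n) → A,
      ∀ g : (Fin n → A) → Fin n → A,
        ∃ l : List (Fin (2 * n + 2 * (q ^ q ^ n) ^ n)), l ≠ [] ∧
          l.length ≤ 2 * n + (q ^ q ^ n) ^ n + 1 ∧
          ∀ x, g (pr (aux_le n _) x) = pr (aux_le n _) (applyInstrs f l x) := by
  haveI : NeZero q := ⟨by omega⟩
  obtain ⟨e⟩ : Nonempty (A ≃ ZMod q) := ⟨Fintype.equivOfCardEq (by rw [hA, ZMod.card])⟩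
  have hcardI : Fintype.card (MCU.Idx A n) = q ^ n * n := by
    rw [Fintype.card_prod, Fintype.card_fun, hA, Fintype.card_fin]
  have hcore := MCU.core_arith hq hn
  have hpow : (q ^ q ^ n) ^ n = q ^ (q ^ n * n) := (pow_mul q (q ^ n) n).symm
  have hm : 2 * n + 2 + Fintype.card (MCU.Idx A n) ≤ 2 * n + 2 * (q ^ q ^ n) ^ n := by
    rw [hcardI, hpow]
    have hmul : q ^ n * n ≤ q ^ n * n * (q + 1) := Nat.le_mul_of_pos_right _ (by omega)
    omega
  refine ⟨MCU.F e hm, fun g => ⟨MCU.prog e hm g, ?_, ?_, ?_⟩⟩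
  · intro h
    have hlen := congrArg List.length h
    simp only [MCU.prog, List.length_append, List.length_map, List.length_finRange,
      List.length_nil] at hlen
    omega
  · have hle := MCU.prog_length e hm g
    rw [hcardI] at hle
    omega
  · intro x
    funext i
    exact (MCU.prog_correct e hm g x i).symm
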